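/- Consider affine maps v⁺, v⁻ : ℝ² → ℝ² and constants q⁺, q⁻ ∈ ℝ satisfying: σ(1, ∇v⁺, q⁺) n − σ(1, ∇v⁻, q⁻) n = t; v⁺ = v⁻ at every point of [D,E]; tr ∇v⁺ = tr ∇v⁻; and all seven degrees of freedom vanish, N₁ = ⋯ = N₇ = 0. Then such a quadruple exists, is unique, and is given explicitly by q⁺ = q⁻ = 0, v⁺(x) = (⟨n, x − D⟩ − L(x)) t and v⁻(x) = −L(x) t, where L = π w is the Crouzeix–Raviart interpolant of w(x) = max(⟨n, x − D⟩, 0). -/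

import Mathlib

open MeasureTheory

noncomputable section

namespace StokesIFE

/-- Euclidean inner product on `ℝ²`. -/
def dot (x y : Fin 2 → ℝ) : ℝ := x 0 * y 0 + x 1 * y 1

/-- Euclidean length of a vector of `ℝ²`. -/
def len (x : Fin 2 → ℝ) : ℝ := Real.sqrt (dot x x)

/-- Strain tensor `ε(A) = (A + Aᵀ)/2`. -/
def eps (A : Matrix (Fin 2) (Fin 2) ℝ) : Matrix (Fin 2) (Fin 2) ℝ :=
  (2⁻¹ : ℝ) • (A + A.transpose)

/-- Cauchy stress tensor `σ(μ, A, q) = 2 μ ε(A) − q I₂`. -/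
def sig (μ : ℝ) (A : Matrix (Fin 2) (Fin 2) ℝ) (q : ℝ) : Matrix (Fin 2) (Fin 2) ℝ :=
  (2 * μ) • eps A - q • (1 : Matrix (Fin 2) (Fin 2) ℝ)

/-- Mean value of `u` over the segment `[P, Q]` with respect to arclength,
expressed through the affine parametrization of the segment. -/
def edgeMean (P Q : Fin 2 → ℝ) (u : (Fin 2 → ℝ) → ℝ) : ℝ :=
  ∫ s in (0:ℝ)..1, u (P + s • (Q - P))

/-- Two-dimensional Lebesgue area of a subset of `ℝ²`. -/
def area (s : Set (Fin 2 → ℝ)) : ℝ := (volume s).toReal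

/-- Squared Frobenius norm of a 2×2 matrix. -/
def frobSq (A : Matrix (Fin 2) (Fin 2) ℝ) : ℝ := ∑ i : Fin 2, ∑ j : Fin 2, (A i j) ^ 2

/-- A triangle `T = conv{A₁, A₂, A₃}` cut by the segment `[D, E]`, where
`D` lies in the open edge `(A₂, A₃)`, `E` lies in the open edge `(A₁, A₃)`,
and `n` is the unit normal of `E − D` pointing towards `A₃`. -/
structure CutTriangle where
  A₁ : Fin 2 → ℝ
  A₂ : Fin 2 → ℝ
  A₃ : Fin 2 → ℝ
  D : Fin 2 → ℝ
  E : Fin 2 → ℝ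
  n : Fin 2 → ℝ
  indep : AffineIndependent ℝ ![A₁, A₂, A₃]
  hD : D ∈ openSegment ℝ A₂ A₃
  hE : E ∈ openSegment ℝ A₁ A₃
  hn_unit : dot n n = 1
  hn_orth : dot n (E - D) = 0
  hn_sign : 0 < dot n (A₃ - D)

namespace CutTriangle

variable (c : CutTriangle)

/-- Tangent vector `t = (n₂, −n₁)`, the rotation of `n` by `−π/2`. -/
def t : Fin 2 → ℝ := ![c.n 1, -(c.n 0)]

/-- The closed triangle. -/
def T : Set (Fin 2 → ℝ) := convexHull ℝ {c.A₁, c.A₂, c.A₃}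

/-- The part of the triangle on the `+` side of the cut. -/
def Tplus : Set (Fin 2 → ℝ) := c.T ∩ {x | 0 ≤ dot c.n (x - c.D)}

/-- The part of the triangle on the `−` side of the cut. -/
def Tminus : Set (Fin 2 → ℝ) := c.T ∩ {x | dot c.n (x - c.D) ≤ 0}

/-- The piecewise linear function `w(x) = max(⟨n, x − D⟩, 0)`. -/
def w (x : Fin 2 → ℝ) : ℝ := max (dot c.n (x - c.D)) 0

/-- `(g, b)` represents the Crouzeix–Raviart interpolant `x ↦ ⟨g, x⟩ + b` of `u` on `T`:
an affine map whose mean value over each of the three edges coincides with that of `u`. -/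
def IsCR (u : (Fin 2 → ℝ) → ℝ) (g : Fin 2 → ℝ) (b : ℝ) : Prop :=
  edgeMean c.A₂ c.A₃ (fun x => dot g x + b) = edgeMean c.A₂ c.A₃ u ∧
  edgeMean c.A₁ c.A₃ (fun x => dot g x + b) = edgeMean c.A₁ c.A₃ u ∧
  edgeMean c.A₁ c.A₂ (fun x => dot g x + b) = edgeMean c.A₁ c.A₂ u

/-- The componentwise Crouzeix–Raviart interpolant `x ↦ Mπ x + bπ` of a vector-valued `u`. -/
def IsCRvec (u : (Fin 2 → ℝ) → Fin 2 → ℝ) (Mπ : Matrix (Fin 2) (Fin 2) ℝ)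
    (bπ : Fin 2 → ℝ) : Prop :=
  ∀ j : Fin 2, c.IsCR (fun x => u x j) (Mπ j) (bπ j)

/-- The piecewise velocity: `x ↦ Mp x + bp` on the `+` side and `x ↦ Mm x + bm`
on the `−` side. -/
def vtilde (Mp : Matrix (Fin 2) (Fin 2) ℝ) (bp : Fin 2 → ℝ)
    (Mm : Matrix (Fin 2) (Fin 2) ℝ) (bm : Fin 2 → ℝ) (x : Fin 2 → ℝ) : Fin 2 → ℝ :=
  if 0 ≤ dot c.n (x - c.D) then Mp.mulVec x + bp else Mm.mulVec x + bm

/-- The seven local degrees of freedom: edge means of the two velocity components over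
the edges `e₁ = [A₂,A₃]`, `e₂ = [A₁,A₃]`, `e₃ = [A₁,A₂]`, and the mean of the
piecewise-constant pressure over `T`. -/
def dof (Mp : Matrix (Fin 2) (Fin 2) ℝ) (bp : Fin 2 → ℝ)
    (Mm : Matrix (Fin 2) (Fin 2) ℝ) (bm : Fin 2 → ℝ) (qp qm : ℝ) : Fin 7 → ℝ :=
  ![edgeMean c.A₂ c.A₃ (fun x => c.vtilde Mp bp Mm bm x 0),
    edgeMean c.A₁ c.A₃ (fun x => c.vtilde Mp bp Mm bm x 0),
    edgeMean c.A₁ c.A₂ (fun x => c.vtilde Mp bp Mm bm x 0),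
    edgeMean c.A₂ c.A₃ (fun x => c.vtilde Mp bp Mm bm x 1),
    edgeMean c.A₁ c.A₃ (fun x => c.vtilde Mp bp Mm bm x 1),
    edgeMean c.A₁ c.A₂ (fun x => c.vtilde Mp bp Mm bm x 1),
    (area c.Tplus * qp + area c.Tminus * qm) / area c.T]

/-- A local IFE pair: affine velocities `v± = Mp/Mm · x + bp/bm` and constant pressures
`q±` satisfying the stress-jump condition (J1), continuity of the velocity on `[D,E]` (J2)
and continuity of the divergence (J3). -/
def IsIFEPair (μp μm : ℝ) (Mp : Matrix (Fin 2) (Fin 2) ℝ) (bp : Fin 2 → ℝ)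
    (Mm : Matrix (Fin 2) (Fin 2) ℝ) (bm : Fin 2 → ℝ) (qp qm : ℝ) : Prop :=
  (sig μp Mp qp).mulVec c.n = (sig μm Mm qm).mulVec c.n ∧
  (∀ x ∈ segment ℝ c.D c.E, Mp.mulVec x + bp = Mm.mulVec x + bm) ∧
  Mp.trace = Mm.trace

/-- The diameter of the triangle (its longest edge). -/
def hT : ℝ := max (len (c.A₂ - c.A₁)) (max (len (c.A₃ - c.A₁)) (len (c.A₃ - c.A₂)))

/-- The perimeter of the triangle. -/
def perim : ℝ := len (c.A₂ - c.A₁) + len (c.A₃ - c.A₁) + len (c.A₃ - c.A₂)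

/-- The inradius of the triangle, `r_T = 2|T| / perimeter`. -/
def rT : ℝ := 2 * area c.T / c.perim

/-- `ϱ`-shape-regularity: `h_T ≤ ϱ r_T`. -/
def ShapeReg (ϱ : ℝ) : Prop := c.hT ≤ ϱ * c.rT

/-- Arclength of the part of the edge `[P,Q]` lying on the `+` side of the cut. -/
def edgeLenPlus (P Q : Fin 2 → ℝ) : ℝ :=
  len (Q - P) *
    (volume {s : ℝ | s ∈ Set.Icc (0:ℝ) 1 ∧ 0 ≤ dot c.n (P + s • (Q - P) - c.D)}).toReal

/-- Arclength of the part of the edge `[P,Q]` lying on the `−` side of the cut. -/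
def edgeLenMinus (P Q : Fin 2 → ℝ) : ℝ :=
  len (Q - P) *
    (volume {s : ℝ | s ∈ Set.Icc (0:ℝ) 1 ∧ dot c.n (P + s • (Q - P) - c.D) ≤ 0}).toReal

/-- Total arclength of `∂T ∩ T⁺`. -/
def bdryLenPlus : ℝ :=
  c.edgeLenPlus c.A₂ c.A₃ + c.edgeLenPlus c.A₁ c.A₃ + c.edgeLenPlus c.A₁ c.A₂

/-- Total arclength of `∂T ∩ T⁻`. -/
def bdryLenMinus : ℝ :=
  c.edgeLenMinus c.A₂ c.A₃ + c.edgeLenMinus c.A₁ c.A₃ + c.edgeLenMinus c.A₁ c.A₂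

end CutTriangle

section Aux

lemma dot_line (G P Q D : Fin 2 → ℝ) (s : ℝ) :
    dot G (P + s • (Q - P) - D) = dot G (P - D) + s * dot G (Q - P) := by
  simp only [dot, Pi.add_apply, Pi.sub_apply, Pi.smul_apply, smul_eq_mul]; ring

lemma dot_line' (G P Q : Fin 2 → ℝ) (s : ℝ) :
    dot G (P + s • (Q - P)) = dot G P + s * dot G (Q - P) := by
  simp only [dot, Pi.add_apply, Pi.sub_apply, Pi.smul_apply, smul_eq_mul]; ring

lemma integral_affine (a cc : ℝ) : (∫ s in (0:ℝ)..1, (a + s * cc)) = a + cc / 2 := by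
  rw [intervalIntegral.integral_add intervalIntegrable_const
    (intervalIntegral.intervalIntegrable_id.mul_const cc)]
  simp [intervalIntegral.integral_mul_const, integral_id]
  ring

lemma edgeMean_affine (G : Fin 2 → ℝ) (B : ℝ) (P Q : Fin 2 → ℝ) :
    edgeMean P Q (fun x => dot G x + B) = (dot G P + B) + dot G (Q - P) / 2 := by
  unfold edgeMean
  have h : (fun s : ℝ => dot G (P + s • (Q - P)) + B)
      = fun s : ℝ => (dot G P + B) + s * dot G (Q - P) := by
    funext s; rw [dot_line']; ring
  rw [h, integral_affine]

lemma edgeMean_const_mul (P Q : Fin 2 → ℝ) (cc : ℝ) (u : (Fin 2 → ℝ) → ℝ) :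
    edgeMean P Q (fun x => cc * u x) = cc * edgeMean P Q u := by
  unfold edgeMean; rw [intervalIntegral.integral_const_mul]

lemma edgeMean_add (P Q : Fin 2 → ℝ) (u v : (Fin 2 → ℝ) → ℝ)
    (hu : IntervalIntegrable (fun s => u (P + s • (Q - P))) volume 0 1)
    (hv : IntervalIntegrable (fun s => v (P + s • (Q - P))) volume 0 1) :
    edgeMean P Q (fun x => u x + v x) = edgeMean P Q u + edgeMean P Q v := by
  unfold edgeMean; exact intervalIntegral.integral_add hu hv

lemma intInt_affine (G P Q : Fin 2 → ℝ) (B : ℝ) :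
    IntervalIntegrable (fun s => dot G (P + s • (Q - P)) + B) volume 0 1 := by
  have h : (fun s : ℝ => dot G (P + s • (Q - P)) + B)
      = fun s : ℝ => (dot G P + B) + s * dot G (Q - P) := by
    funext s; rw [dot_line']; ring
  rw [h]
  exact (continuous_const.add (continuous_id.mul continuous_const)).intervalIntegrable _ _

lemma ortho_zero' (u v G : Fin 2 → ℝ) (hdet : u 0 * v 1 - u 1 * v 0 ≠ 0)
    (h1 : dot G u = 0) (h2 : dot G v = 0) : G = 0 := by
  simp only [dot] at h1 h2
  funext i
  fin_cases i <;> simp only [Fin.zero_eta, Fin.mk_one, Pi.zero_apply]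
  · have h : G 0 * (u 0 * v 1 - u 1 * v 0) = 0 := by
      linear_combination (v 1) * h1 - (u 1) * h2
    exact (mul_eq_zero.mp h).resolve_right hdet
  · have h : G 1 * (u 0 * v 1 - u 1 * v 0) = 0 := by
      linear_combination (-(v 0)) * h1 + (u 0) * h2
    exact (mul_eq_zero.mp h).resolve_right hdet

namespace CutTriangle

variable (c : CutTriangle)

lemma intInt_w (P Q : Fin 2 → ℝ) :
    IntervalIntegrable (fun s => c.w (P + s • (Q - P))) volume 0 1 := by
  have h : (fun s : ℝ => c.w (P + s • (Q - P)))
      = fun s : ℝ => max (dot c.n (P - c.D) + s * dot c.n (Q - P)) 0 := by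
    funext s; unfold w; rw [dot_line]
  rw [h]
  exact ((continuous_const.add (continuous_id.mul continuous_const)).max
    continuous_const).intervalIntegrable _ _

lemma t_apply_0 : c.t 0 = c.n 1 := rfl

lemma t_apply_1 : c.t 1 = -(c.n 0) := rfl

/-- decomposition in the orthonormal basis `{n, t}` -/
lemma decomp (v : Fin 2 → ℝ) (i : Fin 2) :
    v i = dot c.n v * c.n i + dot c.t v * c.t i := by
  have h := c.hn_unit
  simp only [dot, t] at h ⊢
  fin_cases i <;>
    simp only [Fin.zero_eta, Fin.mk_one, Matrix.cons_val_zero, Matrix.cons_val_one,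
      Matrix.head_cons]
  · linear_combination (-(v 0)) * h
  · linear_combination (-(v 1)) * h

lemma weights3 (w : Fin 3 → ℝ) (h0 : w 0 + w 1 + w 2 = 0)
    (h1 : ∀ i : Fin 2, w 0 * c.A₁ i + w 1 * c.A₂ i + w 2 * c.A₃ i = 0) :
    ∀ j, w j = 0 := by
  have h := affineIndependent_iff.mp c.indep Finset.univ w
    (by simpa [Fin.sum_univ_three] using h0)
    (by
      rw [Fin.sum_univ_three]
      funext i
      simpa [Pi.add_apply, Pi.smul_apply, smul_eq_mul] using h1 i)
  intro j; exact h j (Finset.mem_univ j)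

lemma ED_eq (i : Fin 2) : (c.E - c.D) i = dot c.t (c.E - c.D) * c.t i := by
  have h := c.decomp (c.E - c.D) i
  rw [c.hn_orth] at h
  simpa using h

lemma lam_ne : dot c.t (c.E - c.D) ≠ 0 := by
  intro hlam
  have hED : c.E = c.D := by
    funext i
    have h := c.ED_eq i
    rw [hlam] at h
    simp only [Pi.sub_apply] at h
    linarith [h]
  obtain ⟨d, d', hd, hd', hdsum, hDrep⟩ := c.hD
  obtain ⟨e, e', he, he', hesum, hErep⟩ := c.hE
  have key := c.weights3 ![e, -d, e' - d']
    (by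
      simp only [Matrix.cons_val_zero, Matrix.cons_val_one, Matrix.head_cons,
        Matrix.cons_val_two, Matrix.tail_cons]
      linarith)
    (by
      intro i
      have h1 := congrFun hDrep i
      have h2 := congrFun hErep i
      rw [hED] at h2
      simp only [Pi.add_apply, Pi.smul_apply, smul_eq_mul] at h1 h2
      simp only [Matrix.cons_val_zero, Matrix.cons_val_one, Matrix.head_cons,
        Matrix.cons_val_two, Matrix.tail_cons]
      linarith)
  have h0 : e = 0 := by simpa using key 0
  exact absurd h0 (ne_of_gt he)

lemma det_ne :
    (c.A₁ 0 - c.A₂ 0) * (c.A₁ 1 - c.A₃ 1) - (c.A₁ 1 - c.A₂ 1) * (c.A₁ 0 - c.A₃ 0) ≠ 0 := by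
  intro hdet
  rcases eq_or_ne (c.A₁ 0 - c.A₂ 0) 0 with h00 | h00
  · rcases eq_or_ne (c.A₁ 1 - c.A₂ 1) 0 with h01 | h01
    · have key := c.weights3 ![1, -1, 0]
        (by norm_num; rfl)
        (by
          intro i
          simp only [Matrix.cons_val_zero, Matrix.cons_val_one, Matrix.head_cons,
            Matrix.cons_val_two, Matrix.tail_cons]
          fin_cases i <;> simp only [Fin.zero_eta, Fin.mk_one] <;> linarith)
      have : (1 : ℝ) = 0 := by simpa using key 0
      norm_num at this
    · have key := c.weights3
        ![(c.A₁ 1 - c.A₃ 1) - (c.A₁ 1 - c.A₂ 1), -(c.A₁ 1 - c.A₃ 1), c.A₁ 1 - c.A₂ 1]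
        (by
          simp only [Matrix.cons_val_zero, Matrix.cons_val_one, Matrix.head_cons,
            Matrix.cons_val_two, Matrix.tail_cons]
          ring)
        (by
          intro i
          simp only [Matrix.cons_val_zero, Matrix.cons_val_one, Matrix.head_cons,
            Matrix.cons_val_two, Matrix.tail_cons]
          fin_cases i <;> simp only [Fin.zero_eta, Fin.mk_one]
          · linear_combination hdet
          · ring)
      have h2 : c.A₁ 1 - c.A₂ 1 = 0 := by simpa using key 2
      exact h01 h2
  · have key := c.weights3
      ![(c.A₁ 0 - c.A₃ 0) - (c.A₁ 0 - c.A₂ 0), -(c.A₁ 0 - c.A₃ 0), c.A₁ 0 - c.A₂ 0]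
      (by
        simp only [Matrix.cons_val_zero, Matrix.cons_val_one, Matrix.head_cons,
          Matrix.cons_val_two, Matrix.tail_cons]
        ring)
      (by
        intro i
        simp only [Matrix.cons_val_zero, Matrix.cons_val_one, Matrix.head_cons,
          Matrix.cons_val_two, Matrix.tail_cons]
        fin_cases i <;> simp only [Fin.zero_eta, Fin.mk_one]
        · ring
        · linear_combination -hdet)
    have h2 : c.A₁ 0 - c.A₂ 0 = 0 := by simpa using key 2
    exact h00 h2

lemma ortho_zero (G : Fin 2 → ℝ) (h1 : dot G (c.A₁ - c.A₂) = 0)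
    (h2 : dot G (c.A₁ - c.A₃) = 0) : G = 0 := by
  refine ortho_zero' (c.A₁ - c.A₂) (c.A₁ - c.A₃) G ?_ h1 h2
  simpa [Pi.sub_apply] using c.det_ne

end CutTriangle

end Aux

lemma dot_comm (x y : Fin 2 → ℝ) : dot x y = dot y x := by simp only [dot]; ring

lemma mulVec2 (M : Matrix (Fin 2) (Fin 2) ℝ) (x : Fin 2 → ℝ) (i : Fin 2) :
    M.mulVec x i = M i 0 * x 0 + M i 1 * x 1 := by
  simp [Matrix.mulVec, dotProduct, Fin.sum_univ_two]

namespace CutTriangle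

variable (c : CutTriangle)

lemma T_isCompact : IsCompact c.T :=
  Set.Finite.isCompact_convexHull (𝕜 := ℝ) (by
    exact (Set.finite_singleton c.A₃).insert c.A₂ |>.insert c.A₁)

lemma T_ne_top : volume c.T ≠ ⊤ := c.T_isCompact.measure_lt_top.ne

lemma cont_cut : Continuous fun x : Fin 2 → ℝ => dot c.n (x - c.D) := by
  simp only [dot, Pi.sub_apply]
  fun_prop

lemma hyper_null : volume {x : Fin 2 → ℝ | dot c.n (x - c.D) = 0} = 0 := by
  set f : (Fin 2 → ℝ) →ₗ[ℝ] ℝ :=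
    { toFun := fun x => dot c.n x
      map_add' := by intro x y; simp only [dot, Pi.add_apply]; ring
      map_smul' := by intro m x; simp only [dot, Pi.smul_apply, smul_eq_mul,
        RingHom.id_apply]; ring } with hf
  have hK : LinearMap.ker f ≠ ⊤ := by
    intro h
    have hn : c.n ∈ LinearMap.ker f := h.symm ▸ Submodule.mem_top
    have : dot c.n c.n = 0 := by simpa [hf, LinearMap.mem_ker] using hn
    rw [c.hn_unit] at this; norm_num at this
  have h0 : volume ((LinearMap.ker f : Submodule ℝ (Fin 2 → ℝ)) : Set (Fin 2 → ℝ)) = 0 :=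
    MeasureTheory.Measure.addHaar_submodule volume _ hK
  have hset : {x : Fin 2 → ℝ | dot c.n (x - c.D) = 0}
      = (fun x => x + (-c.D)) ⁻¹' ((LinearMap.ker f : Submodule ℝ (Fin 2 → ℝ)) : Set _) := by
    ext x
    simp only [Set.mem_setOf_eq, Set.mem_preimage, SetLike.mem_coe, LinearMap.mem_ker, hf,
      LinearMap.coe_mk, AddHom.coe_mk, sub_eq_add_neg]
  rw [hset, measure_preimage_add_right volume (-c.D) _]
  exact h0

lemma Tm_meas : MeasurableSet c.Tminus := by
  refine (c.T_isCompact.isClosed.measurableSet).inter ?_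
  exact measurableSet_le c.cont_cut.measurable measurable_const

lemma area_split : area c.Tplus + area c.Tminus = area c.T := by
  have huni : c.Tplus ∪ c.Tminus = c.T := by
    ext x
    simp only [Tplus, Tminus, Set.mem_union, Set.mem_inter_iff, Set.mem_setOf_eq]
    constructor
    · rintro (⟨hx, _⟩ | ⟨hx, _⟩) <;> exact hx
    · intro hx
      rcases le_total 0 (dot c.n (x - c.D)) with h | h
      · exact Or.inl ⟨hx, h⟩
      · exact Or.inr ⟨hx, h⟩
  have hintr : volume (c.Tplus ∩ c.Tminus) = 0 := by
    refine measure_mono_null ?_ c.hyper_null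
    rintro x ⟨⟨_, h1⟩, ⟨_, h2⟩⟩
    exact le_antisymm h2 h1
  have key := measure_union_add_inter (μ := volume) c.Tplus c.Tm_meas
  rw [huni, hintr, add_zero] at key
  have hp : volume c.Tplus ≠ ⊤ :=
    ne_top_of_le_ne_top c.T_ne_top (measure_mono Set.inter_subset_left)
  have hm : volume c.Tminus ≠ ⊤ :=
    ne_top_of_le_ne_top c.T_ne_top (measure_mono Set.inter_subset_left)
  unfold area
  rw [← ENNReal.toReal_add hp hm, key]

lemma area_pos : 0 < area c.T := by
  have hrange : Set.range ![c.A₁, c.A₂, c.A₃] = {c.A₁, c.A₂, c.A₃} := by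
    simp only [Matrix.range_cons, Matrix.range_empty, Set.union_empty,
      Set.union_singleton]
    ext y; simp; tauto
  have hspan : affineSpan ℝ ({c.A₁, c.A₂, c.A₃} : Set (Fin 2 → ℝ)) = ⊤ := by
    rw [← hrange]
    exact c.indep.affineSpan_eq_top_iff_card_eq_finrank_add_one.mpr (by simp)
  have hint : (interior c.T).Nonempty := by
    unfold T
    exact interior_convexHull_nonempty_iff_affineSpan_eq_top.mpr hspan
  have h1 : 0 < volume (interior c.T) := isOpen_interior.measure_pos volume hint
  have h2 : 0 < volume c.T := lt_of_lt_of_le h1 (measure_mono interior_subset)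
  exact ENNReal.toReal_pos h2.ne' c.T_ne_top

end CutTriangle


/-- the quadruple `(v⁺, v⁻, q⁺, q⁻)` (with `v± x = M± x + b±`) satisfying the
tangential stress-jump `σ(1,∇v⁺,q⁺)n − σ(1,∇v⁻,q⁻)n = t`, continuity on `[D,E]`, divergence
continuity and vanishing degrees of freedom exists, is unique, and is given explicitly by
`q⁺ = q⁻ = 0`, `v⁺(x) = (⟨n, x − D⟩ − L(x)) t`, `v⁻(x) = −L(x) t`, where `L = π w`
(represented by `L x = ⟨g, x⟩ + b`) is the CR interpolant of `w(x) = max(⟨n, x − D⟩, 0)`. -/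
theorem statement5 (c : CutTriangle) (g : Fin 2 → ℝ) (b : ℝ)
    (hL : c.IsCR c.w g b)
    (Mp Mm : Matrix (Fin 2) (Fin 2) ℝ) (bp bm : Fin 2 → ℝ) (qp qm : ℝ) :
    ((sig 1 Mp qp).mulVec c.n - (sig 1 Mm qm).mulVec c.n = c.t ∧
      (∀ x ∈ segment ℝ c.D c.E, Mp.mulVec x + bp = Mm.mulVec x + bm) ∧
      Mp.trace = Mm.trace ∧
      c.dof Mp bp Mm bm qp qm = 0) ↔
    (qp = 0 ∧ qm = 0 ∧
      (∀ x : Fin 2 → ℝ, Mp.mulVec x + bp = (dot c.n (x - c.D) - (dot g x + b)) • c.t) ∧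
      (∀ x : Fin 2 → ℝ, Mm.mulVec x + bm = (-(dot g x + b)) • c.t)) := by
  have hu : c.n 0 * c.n 0 + c.n 1 * c.n 1 = 1 := by
    have h := c.hn_unit; simpa [dot] using h
  have ht0 : c.t 0 = c.n 1 := rfl
  have ht1 : c.t 1 = -(c.n 0) := rfl
  constructor
  · rintro ⟨H1, H2, H3, H4⟩
    have hd : ∀ i, c.dof Mp bp Mm bm qp qm i = 0 := fun i => congrFun H4 i
    have hd0 : edgeMean c.A₂ c.A₃ (fun x => c.vtilde Mp bp Mm bm x 0) = 0 := hd 0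
    have hd1 : edgeMean c.A₁ c.A₃ (fun x => c.vtilde Mp bp Mm bm x 0) = 0 := hd 1
    have hd2 : edgeMean c.A₁ c.A₂ (fun x => c.vtilde Mp bp Mm bm x 0) = 0 := hd 2
    have hd3 : edgeMean c.A₂ c.A₃ (fun x => c.vtilde Mp bp Mm bm x 1) = 0 := hd 3
    have hd4 : edgeMean c.A₁ c.A₃ (fun x => c.vtilde Mp bp Mm bm x 1) = 0 := hd 4
    have hd5 : edgeMean c.A₁ c.A₂ (fun x => c.vtilde Mp bp Mm bm x 1) = 0 := hd 5
    have hd6 : (area c.Tplus * qp + area c.Tminus * qm) / area c.T = 0 := hd 6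
    have hDseg := H2 c.D (left_mem_segment ℝ c.D c.E)
    have hEseg := H2 c.E (right_mem_segment ℝ c.D c.E)
    -- rows of the jump matrix are multiples of n
    have hrow : ∀ i j : Fin 2, Mp i j - Mm i j
        = (dot c.n fun k => Mp i k - Mm i k) * c.n j := by
      intro i j
      have hDi := congrFun hDseg i
      have hEi := congrFun hEseg i
      rw [Pi.add_apply, Pi.add_apply, mulVec2, mulVec2] at hDi hEi
      have hED0 := c.ED_eq 0
      have hED1 := c.ED_eq 1
      simp only [Pi.sub_apply] at hED0 hED1
      have h2 : dot c.t (c.E - c.D)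
          * ((Mp i 0 - Mm i 0) * c.t 0 + (Mp i 1 - Mm i 1) * c.t 1) = 0 := by
        linear_combination hEi - hDi - (Mp i 0 - Mm i 0) * hED0 - (Mp i 1 - Mm i 1) * hED1
      have h3 : (Mp i 0 - Mm i 0) * c.t 0 + (Mp i 1 - Mm i 1) * c.t 1 = 0 :=
        (mul_eq_zero.mp h2).resolve_left c.lam_ne
      have h5 : dot c.t (fun k => Mp i k - Mm i k) = 0 := by
        simp only [dot]; linear_combination h3
      have h4 := c.decomp (fun k => Mp i k - Mm i k) j
      rw [h5] at h4
      simpa using h4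
    have h00 := hrow 0 0
    have h01 := hrow 0 1
    have h10 := hrow 1 0
    have h11 := hrow 1 1
    set μ0 := dot c.n (fun k => Mp 0 k - Mm 0 k) with hμ0def
    set μ1 := dot c.n (fun k => Mp 1 k - Mm 1 k) with hμ1def
    have htr : Mp 0 0 + Mp 1 1 = Mm 0 0 + Mm 1 1 := by
      simpa [Matrix.trace, Matrix.diag, Fin.sum_univ_two] using H3
    have hnm' : c.n 0 * μ0 + c.n 1 * μ1 = 0 := by
      linear_combination htr - h00 - h11
    have hdec0 := c.decomp ![μ0, μ1] 0
    have hdec1 := c.decomp ![μ0, μ1] 1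
    simp only [dot, Matrix.cons_val_zero, Matrix.cons_val_one, Matrix.head_cons, ht0, ht1]
      at hdec0 hdec1
    have hm0 : μ0 = (c.n 1 * μ0 + -c.n 0 * μ1) * c.n 1 := by
      linear_combination hdec0 + c.n 0 * hnm'
    have hm1 : μ1 = -((c.n 1 * μ0 + -c.n 0 * μ1) * c.n 0) := by
      linear_combination hdec1 + c.n 1 * hnm'
    -- the stress jump equations
    have hH0 := congrFun H1 0
    have hH1 := congrFun H1 1
    rw [Pi.sub_apply, mulVec2, mulVec2] at hH0 hH1
    simp only [sig, eps, Matrix.sub_apply, Matrix.smul_apply, Matrix.add_apply,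
      Matrix.transpose_apply, Matrix.one_apply, smul_eq_mul, ht0, ht1] at hH0 hH1
    norm_num at hH0 hH1
    have E0 : (c.n 1 * μ0 + -c.n 0 * μ1) * c.n 1 * (c.n 0 * c.n 0 + c.n 1 * c.n 1)
        - (qp - qm) * c.n 0 = c.n 1 := by
      linear_combination hH0 - 2 * c.n 0 * h00 - c.n 1 * h01 - c.n 1 * h10
        - (2 * c.n 0 ^ 2 + c.n 1 ^ 2) * hm0 - (c.n 0 * c.n 1) * hm1
    have E1 : -((c.n 1 * μ0 + -c.n 0 * μ1) * c.n 0) * (c.n 0 * c.n 0 + c.n 1 * c.n 1)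
        - (qp - qm) * c.n 1 = -(c.n 0) := by
      linear_combination hH1 - 2 * c.n 1 * h11 - c.n 0 * h01 - c.n 0 * h10
        - (c.n 0 * c.n 1) * hm0 - (2 * c.n 1 ^ 2 + c.n 0 ^ 2) * hm1
    have hq : qp = qm := by
      linear_combination (-(c.n 0)) * E0 - c.n 1 * E1 - (qp - qm) * hu
    have hβ : c.n 1 * μ0 + -c.n 0 * μ1 = 1 := by
      linear_combination c.n 1 * E0 - c.n 0 * E1
        + (1 - (c.n 1 * μ0 + -c.n 0 * μ1) * (c.n 0 * c.n 0 + c.n 1 * c.n 1 + 1)) * hu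
    -- pressures vanish
    have hq0 : qp = 0 := by
      rw [← hq] at hd6
      have hnum : area c.Tplus * qp + area c.Tminus * qp = qp * area c.T := by
        linear_combination qp * c.area_split
      rw [hnum, mul_div_assoc, div_self c.area_pos.ne', mul_one] at hd6
      exact hd6
    have hqm0 : qm = 0 := hq ▸ hq0
    -- jump matrix is t ⊗ n
    have hμ0v : μ0 = c.n 1 := by linear_combination hm0 + c.n 1 * hβ
    have hμ1v : μ1 = -(c.n 0) := by linear_combination hm1 - c.n 0 * hβ
    have hΔ : ∀ i j, Mp i j = Mm i j + c.t i * c.n j := by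
      intro i j
      fin_cases i <;> fin_cases j <;>
        simp only [Fin.zero_eta, Fin.mk_one, ht0, ht1]
      · linear_combination h00 + c.n 0 * hμ0v
      · linear_combination h01 + c.n 1 * hμ0v
      · linear_combination h10 + c.n 0 * hμ1v
      · linear_combination h11 + c.n 1 * hμ1v
    have hbdiff : ∀ i, bp i = bm i - c.t i * (c.n 0 * c.D 0 + c.n 1 * c.D 1) := by
      intro i
      have hDi := congrFun hDseg i
      rw [Pi.add_apply, Pi.add_apply, mulVec2, mulVec2] at hDi
      linear_combination hDi - c.D 0 * hΔ i 0 - c.D 1 * hΔ i 1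
    -- pointwise description of the broken velocity
    have hvt : ∀ (x : Fin 2 → ℝ) (i : Fin 2), c.vtilde Mp bp Mm bm x i
        = (dot (fun k => Mm i k) x + bm i) + c.t i * c.w x := by
      intro x i
      unfold CutTriangle.vtilde CutTriangle.w
      split_ifs with hx
      · rw [Pi.add_apply, mulVec2, max_eq_left hx]
        simp only [dot, Pi.sub_apply]
        linear_combination x 0 * hΔ i 0 + x 1 * hΔ i 1 + hbdiff i
      · push_neg at hx
        rw [Pi.add_apply, mulVec2, max_eq_right hx.le]
        simp only [dot]
        ring
    have hmean : ∀ (P Q : Fin 2 → ℝ) (i : Fin 2),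
        edgeMean P Q (fun x => c.vtilde Mp bp Mm bm x i)
          = edgeMean P Q (fun x => dot (fun k => Mm i k) x + bm i)
            + c.t i * edgeMean P Q c.w := by
      intro P Q i
      have hfun : (fun x => c.vtilde Mp bp Mm bm x i)
          = fun x => (dot (fun k => Mm i k) x + bm i) + c.t i * c.w x :=
        funext fun x => hvt x i
      rw [hfun]
      unfold edgeMean
      rw [intervalIntegral.integral_add (intInt_affine _ P Q _)
        ((c.intInt_w P Q).const_mul _), intervalIntegral.integral_const_mul]
    -- Crouzeix–Raviart matching per component
    have hfin : ∀ i : Fin 2, (∀ k, Mm i k + c.t i * g k = 0) ∧ bm i + c.t i * b = 0 := by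
      intro i
      have hE1 : edgeMean c.A₂ c.A₃ (fun x => c.vtilde Mp bp Mm bm x i) = 0 := by
        fin_cases i
        · exact hd0
        · exact hd3
      have hE2 : edgeMean c.A₁ c.A₃ (fun x => c.vtilde Mp bp Mm bm x i) = 0 := by
        fin_cases i
        · exact hd1
        · exact hd4
      have hE3 : edgeMean c.A₁ c.A₂ (fun x => c.vtilde Mp bp Mm bm x i) = 0 := by
        fin_cases i
        · exact hd2
        · exact hd5
      rw [hmean c.A₂ c.A₃ i, ← hL.1, edgeMean_affine, edgeMean_affine] at hE1
      rw [hmean c.A₁ c.A₃ i, ← hL.2.1, edgeMean_affine, edgeMean_affine] at hE2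
      rw [hmean c.A₁ c.A₂ i, ← hL.2.2, edgeMean_affine, edgeMean_affine] at hE3
      simp only [dot, Pi.sub_apply] at hE1 hE2 hE3
      have hG : (fun k => Mm i k + c.t i * g k) = 0 := by
        apply c.ortho_zero
        · simp only [dot, Pi.sub_apply]
          linear_combination 2 * hE2 - 2 * hE1
        · simp only [dot, Pi.sub_apply]
          linear_combination 2 * hE3 - 2 * hE1
      have hG0 : Mm i 0 + c.t i * g 0 = 0 := by simpa using congrFun hG 0
      have hG1 : Mm i 1 + c.t i * g 1 = 0 := by simpa using congrFun hG 1
      refine ⟨fun k => by fin_cases k <;> simp only [Fin.zero_eta, Fin.mk_one] <;>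
        [exact hG0; exact hG1], ?_⟩
      linear_combination hE3 - (c.A₁ 0 + (c.A₂ 0 - c.A₁ 0) / 2) * hG0
        - (c.A₁ 1 + (c.A₂ 1 - c.A₁ 1) / 2) * hG1
    refine ⟨hq0, hqm0, ?_, ?_⟩
    · intro x
      funext i
      rw [Pi.add_apply, mulVec2, Pi.smul_apply, smul_eq_mul]
      simp only [dot, Pi.sub_apply]
      linear_combination x 0 * hΔ i 0 + x 1 * hΔ i 1 + hbdiff i
        + x 0 * (hfin i).1 0 + x 1 * (hfin i).1 1 + (hfin i).2
    · intro x
      funext i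
      rw [Pi.add_apply, mulVec2, Pi.smul_apply, smul_eq_mul]
      simp only [dot]
      linear_combination x 0 * (hfin i).1 0 + x 1 * (hfin i).1 1 + (hfin i).2
  · rintro ⟨hqp, hqm, hvp, hvm⟩
    subst hqp; subst hqm
    have hvp' : ∀ (x : Fin 2 → ℝ) (i : Fin 2), Mp.mulVec x i + bp i
        = (dot c.n (x - c.D) - (dot g x + b)) * c.t i := by
      intro x i
      have h := congrFun (hvp x) i
      simpa [Pi.add_apply, Pi.smul_apply, smul_eq_mul] using h
    have hvm' : ∀ (x : Fin 2 → ℝ) (i : Fin 2), Mm.mulVec x i + bm i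
        = (-(dot g x + b)) * c.t i := by
      intro x i
      have h := congrFun (hvm x) i
      simpa [Pi.add_apply, Pi.smul_apply, smul_eq_mul] using h
    have hbm : ∀ i, bm i = -b * c.t i := by
      intro i
      have h := hvm' 0 i
      simpa [Matrix.mulVec_zero, dot] using h
    have hbp : ∀ i, bp i = (-(c.n 0 * c.D 0 + c.n 1 * c.D 1) - b) * c.t i := by
      intro i
      have h := hvp' 0 i
      simp only [Matrix.mulVec_zero, Pi.zero_apply, zero_add, dot, Pi.sub_apply] at h
      rw [h]; ring
    have hMm : ∀ i j, Mm i j = -(g j) * c.t i := by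
      intro i j
      fin_cases j
      · have h := hvm' ![1, 0] i
        rw [mulVec2] at h
        simp only [Fin.zero_eta, Fin.mk_one]
        simp only [dot, Matrix.cons_val_zero, Matrix.cons_val_one, Matrix.head_cons,
          mul_one, mul_zero, add_zero] at h
        have hb := hbm i
        linear_combination h - hb
      · have h := hvm' ![0, 1] i
        rw [mulVec2] at h
        simp only [Fin.zero_eta, Fin.mk_one]
        simp only [dot, Matrix.cons_val_zero, Matrix.cons_val_one, Matrix.head_cons,
          mul_one, mul_zero, add_zero, zero_add] at h
        have hb := hbm i
        linear_combination h - hb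
    have hMp : ∀ i j, Mp i j = (c.n j - g j) * c.t i := by
      intro i j
      fin_cases j
      · have h := hvp' ![1, 0] i
        rw [mulVec2] at h
        simp only [Fin.zero_eta, Fin.mk_one]
        simp only [dot, Pi.sub_apply, Matrix.cons_val_zero, Matrix.cons_val_one,
          Matrix.head_cons, mul_one, mul_zero, add_zero] at h
        have hb := hbp i
        linear_combination h - hb
      · have h := hvp' ![0, 1] i
        rw [mulVec2] at h
        simp only [Fin.zero_eta, Fin.mk_one]
        simp only [dot, Pi.sub_apply, Matrix.cons_val_zero, Matrix.cons_val_one,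
          Matrix.head_cons, mul_one, mul_zero, add_zero, zero_add] at h
        have hb := hbp i
        linear_combination h - hb
    refine ⟨?_, ?_, ?_, ?_⟩
    · -- stress jump
      funext i
      rw [Pi.sub_apply, mulVec2, mulVec2]
      simp only [sig, eps, Matrix.sub_apply, Matrix.smul_apply, Matrix.add_apply,
        Matrix.transpose_apply, smul_eq_mul, zero_mul, sub_zero, mul_one]
      fin_cases i <;>
        simp only [Fin.zero_eta, Fin.mk_one, hMp, hMm, ht0, ht1]
      · linear_combination (c.n 1) * hu
      · linear_combination (-(c.n 0)) * hu
    · -- continuity on [D,E]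
      intro x hx
      obtain ⟨a, a', ha, ha', hsum, hrep⟩ := hx
      have h0 := congrFun hrep 0
      have h1 := congrFun hrep 1
      simp only [Pi.add_apply, Pi.smul_apply, smul_eq_mul] at h0 h1
      have horth := c.hn_orth
      simp only [dot, Pi.sub_apply] at horth
      have hzero : dot c.n (x - c.D) = 0 := by
        simp only [dot, Pi.sub_apply]
        linear_combination (-(c.n 0)) * h0 - (c.n 1) * h1 + a' * horth
          + (c.n 0 * c.D 0 + c.n 1 * c.D 1) * hsum
      rw [hvp x, hvm x, hzero]
      norm_num
    · -- trace
      simp only [Matrix.trace, Matrix.diag, Fin.sum_univ_two]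
      rw [hMp 0 0, hMp 1 1, hMm 0 0, hMm 1 1, ht0, ht1]
      ring
    · -- dof
      have key : ∀ (P Q : Fin 2 → ℝ),
          edgeMean P Q (fun x => dot g x + b) = edgeMean P Q c.w →
          ∀ i : Fin 2, edgeMean P Q (fun x => c.vtilde Mp bp Mm bm x i) = 0 := by
        intro P Q hE i
        have hfun : (fun x => c.vtilde Mp bp Mm bm x i)
            = fun x => c.t i * c.w x
                + (dot (fun k => -(c.t i) * g k) x + -(c.t i) * b) := by
          funext x
          unfold CutTriangle.vtilde
          split_ifs with hx
          · rw [Pi.add_apply, hvp' x i]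
            unfold CutTriangle.w
            rw [max_eq_left hx]
            simp only [dot, Pi.sub_apply]
            ring
          · rw [Pi.add_apply, hvm' x i]
            unfold CutTriangle.w
            push_neg at hx
            rw [max_eq_right hx.le]
            simp only [dot, Pi.sub_apply]
            ring
        have hi1 : IntervalIntegrable (fun s => c.t i * c.w (P + s • (Q - P))) volume 0 1 :=
          (c.intInt_w P Q).const_mul _
        have hi2 : IntervalIntegrable
            (fun s => dot (fun k => -(c.t i) * g k) (P + s • (Q - P)) + -(c.t i) * b)
            volume 0 1 := intInt_affine _ P Q _
        rw [hfun]
        have hsplit : edgeMean P Q (fun x => c.t i * c.w x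
              + (dot (fun k => -(c.t i) * g k) x + -(c.t i) * b))
            = (∫ s in (0:ℝ)..1, c.t i * c.w (P + s • (Q - P)))
              + ∫ s in (0:ℝ)..1,
                  (dot (fun k => -(c.t i) * g k) (P + s • (Q - P)) + -(c.t i) * b) := by
          unfold edgeMean
          exact intervalIntegral.integral_add hi1 hi2
        rw [hsplit, intervalIntegral.integral_const_mul]
        have hw : (∫ s in (0:ℝ)..1, c.w (P + s • (Q - P))) = edgeMean P Q c.w := rfl
        have ha : (∫ s in (0:ℝ)..1,
              (dot (fun k => -(c.t i) * g k) (P + s • (Q - P)) + -(c.t i) * b))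
            = edgeMean P Q (fun x => dot (fun k => -(c.t i) * g k) x + -(c.t i) * b) := rfl
        rw [hw, ha, ← hE, edgeMean_affine, edgeMean_affine]
        simp only [dot, Pi.sub_apply]
        ring
      funext i
      fin_cases i <;>
        simp only [CutTriangle.dof, Fin.zero_eta, Fin.mk_one, Matrix.cons_val_zero,
          Matrix.cons_val_one, Matrix.head_cons, Matrix.cons_val_succ, Pi.zero_apply]
      · exact key c.A₂ c.A₃ hL.1 0
      · exact key c.A₁ c.A₃ hL.2.1 0
      · exact key c.A₁ c.A₂ hL.2.2 0
      · exact key c.A₂ c.A₃ hL.1 1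
      · exact key c.A₁ c.A₃ hL.2.1 1
      · exact key c.A₁ c.A₂ hL.2.2 1
      · show (area c.Tplus * 0 + area c.Tminus * 0) / area c.T = 0
        simp


end StokesIFE
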